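/- Let k ≥ 1 and let G be a chordal k-colorable graph on n ≥ 1 vertices, and let T be a clique of G. Then there exists a chordal nice tree decomposition of the terminal graph (G,T) that has at most (k+3)·n nodes. -/

import Mathlib

open SimpleGraph

/-- A proper `k`-coloring of a graph. -/
def IsColoring {W : Type*} (G : SimpleGraph W) (k : ℕ) (α : W → Fin k) : Prop :=
  ∀ u v : W, G.Adj u v → α u ≠ α v

/-- The `k`-color graph `C_k(G)`: nodes are proper `k`-colorings of `G`,
two colorings being adjacent iff they differ on exactly one vertex. -/
def colorGraph {W : Type*} (G : SimpleGraph W) (k : ℕ) :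
    SimpleGraph {α : W → Fin k // IsColoring G k α} where
  Adj α β := ∃! w, α.1 w ≠ β.1 w
  symm := ⟨by
    rintro α β ⟨w, hw, hu⟩
    exact ⟨w, hw.symm, fun u hu' => hu u hu'.symm⟩⟩
  loopless := ⟨by
    rintro α ⟨w, hw, -⟩
    exact hw rfl⟩

/-- The subgraph of a labeled graph consisting of the edges between
equally labeled nodes. -/
def sameLabelSub {N L : Type*} (H : SimpleGraph N) (f : N → L) : SimpleGraph N where
  Adj x y := H.Adj x y ∧ f x = f y
  symm := ⟨fun _ _ h => ⟨h.1.symm, h.2.symm⟩⟩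
  loopless := ⟨fun x h => H.ne_of_adj h.1 rfl⟩

/-- The quotient graph obtained from a labeled graph by contracting every
(maximal) connected set of equally labeled nodes (i.e. every label component)
into a single node. -/
def quotGraph {N L : Type*} (H : SimpleGraph N) (f : N → L) :
    SimpleGraph (sameLabelSub H f).ConnectedComponent where
  Adj c d := c ≠ d ∧ ∃ a b, (sameLabelSub H f).connectedComponentMk a = c ∧
      (sameLabelSub H f).connectedComponentMk b = d ∧ H.Adj a b
  symm := ⟨by
    rintro c d ⟨hne, a, b, ha, hb, hab⟩
    exact ⟨hne.symm, b, a, hb, ha, hab.symm⟩⟩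
  loopless := ⟨fun c h => h.1 rfl⟩

/-- The common label of a label component. -/
def quotLabel {N L : Type*} (H : SimpleGraph N) (f : N → L) :
    (sameLabelSub H f).ConnectedComponent → L :=
  SimpleGraph.ConnectedComponent.lift f (by
    intro v w p hp
    clear hp
    induction p with
    | nil => rfl
    | cons h _ ih => exact (h : H.Adj _ _ ∧ f _ = f _).2.trans ih)

/-- The label of a coloring: its restriction to the terminal set `T`. -/
def csgLabelFun {W : Type*} (G : SimpleGraph W) (k : ℕ) (T : Set W) :
    {α : W → Fin k // IsColoring G k α} → (T → Fin k) :=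
  fun α t => α.1 t.1

/-- The node set of the contracted solution graph: the label components. -/
abbrev CSGNode {W : Type*} (G : SimpleGraph W) (k : ℕ) (T : Set W) :=
  (sameLabelSub (colorGraph G k) (csgLabelFun G k T)).ConnectedComponent

/-- The contracted solution graph `C^c_k(G,T)`. -/
def CSG {W : Type*} (G : SimpleGraph W) (k : ℕ) (T : Set W) : SimpleGraph (CSGNode G k T) :=
  quotGraph (colorGraph G k) (csgLabelFun G k T)

/-- The `γ`-node of the contracted solution graph: the label component containing `γ`. -/
def csgNode {W : Type*} (G : SimpleGraph W) (k : ℕ) (T : Set W)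
    (γ : {α : W → Fin k // IsColoring G k α}) : CSGNode G k T :=
  (sameLabelSub (colorGraph G k) (csgLabelFun G k T)).connectedComponentMk γ

/-- The label of a node of the contracted solution graph: the common restriction
to `T` of its colorings. -/
def csgLabel {W : Type*} (G : SimpleGraph W) (k : ℕ) (T : Set W) :
    CSGNode G k T → (T → Fin k) :=
  quotLabel (colorGraph G k) (csgLabelFun G k T)

/-- The restriction of a proper coloring to an induced subgraph. -/
def restrictColoring {W : Type*} (G : SimpleGraph W) (k : ℕ) (S : Set W)
    (γ : {α : W → Fin k // IsColoring G k α}) :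
    {α : S → Fin k // IsColoring (G.induce S) k α} :=
  ⟨fun u => γ.1 u.1, fun u w h => γ.2 u.1 w.1 h⟩

/-- A graph is chordal if it contains no induced cycle of length greater than 3. -/
def Chordal {W : Type*} (G : SimpleGraph W) : Prop :=
  ∀ n : ℕ, 4 ≤ n → IsEmpty (SimpleGraph.cycleGraph n ↪g G)

/-- `S` is a vertex cut: `G - S` is disconnected. -/
def IsVertexCut {W : Type*} (G : SimpleGraph W) (S : Set W) : Prop :=
  ¬ (G.induce Sᶜ).Preconnected

/-- `G` is `l`-connected. -/
def LConnected {W : Type*} (G : SimpleGraph W) (l : ℕ) : Prop :=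
  G.Connected ∧ l + 1 ≤ Nat.card W ∧ ∀ S : Set W, IsVertexCut G S → l ≤ S.ncard

/-- A labeled graph `(H,ℓ)`, whose labels are `k`-colorings of the complete graph
on a vertex (type) `S`, is an `(|S|,k)`-color-complete graph. -/
def IsColorComplete {N S : Type*} (k : ℕ) (H : SimpleGraph N) (ℓ : N → S → Fin k) : Prop :=
  (∀ x, Function.Injective (ℓ x)) ∧
  (∀ f : S → Fin k, Function.Injective f → ∃! x, ℓ x = f) ∧
  (∀ x y, H.Adj x y ↔ ∃! s, ℓ x s ≠ ℓ y s)

/-- The injective neighborhood property. -/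
def INP {N L : Type*} (H : SimpleGraph N) (ℓ : N → L) : Prop :=
  ∀ u v w : N, H.Adj u v → H.Adj u w → v ≠ w → ℓ v ≠ ℓ w

/-- The weight `w(P)` of a walk `P` in a labeled graph: the sum over the vertices `x`
of `P` of the number of colors used by labels of neighbors of `x` in `P` but not by
the label of `x`. -/
noncomputable def walkWeight {N S : Type*} {k : ℕ} {G : SimpleGraph N} (ℓ : N → S → Fin k)
    {a b : N} (P : G.Walk a b) : ℕ :=
  letI := Classical.decEq N
  ∑ x ∈ P.support.toFinset,
    ((⋃ y ∈ P.toSubgraph.neighborSet x, Set.range (ℓ y)) \ Set.range (ℓ x)).ncard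

/-- `CNiceTD G U T n` holds iff there is a chordal nice tree decomposition (i.e. one
in which every bag is a clique of `G`) with exactly `n` nodes of the terminal graph
`(G[U], T)`, following the recursive definition via leaf, forget, introduce and join
operations. -/
inductive CNiceTD {V : Type*} (G : SimpleGraph V) : Set V → Set V → ℕ → Prop
  | leaf (T : Set V) (hbag : G.IsClique T) : CNiceTD G T T 1
  | forget (U T : Set V) (v : V) (hvU : v ∈ U) (hvT : v ∉ T)
      (hbag : G.IsClique T) (n : ℕ)
      (prev : CNiceTD G U (T ∪ {v}) n) : CNiceTD G U T (n + 1)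
  | introduce (U T : Set V) (v : V) (hv : v ∈ T) (hTU : T ⊆ U) (hne : T ≠ U)
      (hN : ∀ u ∈ U, G.Adj v u → u ∈ T) (hbag : G.IsClique T) (n : ℕ)
      (prev : CNiceTD G (U \ {v}) (T \ {v}) n) : CNiceTD G U T (n + 1)
  | join (U₁ U₂ T : Set V) (hcap : U₁ ∩ U₂ = T) (hne1 : U₁ ≠ T) (hne2 : U₂ ≠ T)
      (hedge : ∀ u v' : V, u ∈ U₁ ∪ U₂ → v' ∈ U₁ ∪ U₂ → G.Adj u v' →
        (u ∈ U₁ ∧ v' ∈ U₁) ∨ (u ∈ U₂ ∧ v' ∈ U₂))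
      (hbag : G.IsClique T) (n₁ n₂ : ℕ)
      (p1 : CNiceTD G U₁ T n₁) (p2 : CNiceTD G U₂ T n₂) :
      CNiceTD G (U₁ ∪ U₂) T (n₁ + n₂ + 1)


/- ### Auxiliary machinery for `statement_9` -/

section Infra

variable {V : Type} {G : SimpleGraph V}

/-- A combinatorial chain for a relation. -/
def RelChain (R : V → V → Prop) (a b : V) (p : ℕ → V) (m : ℕ) : Prop :=
  p 0 = a ∧ p m = b ∧ ∀ t, t < m → R (p t) (p (t + 1))

lemma chain_of_rtg {R : V → V → Prop} {a b : V} (h : Relation.ReflTransGen R a b) :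
    ∃ m p, RelChain R a b p m := by
  induction h with
  | refl => exact ⟨0, fun _ => a, rfl, rfl, fun t ht => absurd ht (by omega)⟩
  | @tail b c hab hbc ih =>
    obtain ⟨m, p, h0, hm, hstep⟩ := ih
    refine ⟨m + 1, fun t => if t ≤ m then p t else c, by simp [h0], by simp, ?_⟩
    intro t ht
    by_cases h1 : t + 1 ≤ m
    · simp only [if_pos (by omega : t ≤ m), if_pos h1]
      exact hstep t (by omega)
    · have ht' : t = m := by omega
      simp only [ht', if_pos le_rfl, if_neg (by omega : ¬ m + 1 ≤ m), hm]
      exact hbc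

lemma chain_shorten_eq {R : V → V → Prop} {a b : V} {p : ℕ → V} {m : ℕ}
    (hc : RelChain R a b p m) {i j : ℕ} (hij : i < j) (hjm : j ≤ m) (heq : p i = p j) :
    ∃ q, RelChain R a b q (m - (j - i)) := by
  obtain ⟨h0, hm, hstep⟩ := hc
  refine ⟨fun t => if t ≤ i then p t else p (t + (j - i)), by simp [h0], ?_, ?_⟩
  · beta_reduce
    by_cases hmi : m - (j - i) ≤ i
    · have h1 : m - (j - i) = i := by omega
      have h2 : j = m := by omega
      rw [if_pos hmi, h1, heq, h2, hm]
    · rw [if_neg hmi]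
      have h3 : m - (j - i) + (j - i) = m := by omega
      rw [h3, hm]
  · intro t ht
    by_cases h1 : t + 1 ≤ i
    · simp only [if_pos (by omega : t ≤ i), if_pos h1]
      exact hstep t (by omega)
    · by_cases h2 : t ≤ i
      · have hti : t = i := by omega
        simp only [hti, if_pos le_rfl, if_neg (by omega : ¬ i + 1 ≤ i), heq]
        have h3 : i + 1 + (j - i) = j + 1 := by omega
        rw [h3]
        exact hstep j (by omega)
      · simp only [if_neg h2, if_neg (by omega : ¬ t + 1 ≤ i)]
        have h3 : t + 1 + (j - i) = t + (j - i) + 1 := by omega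
        rw [h3]
        exact hstep _ (by omega)

lemma chain_shorten_adj {R : V → V → Prop} {a b : V} {p : ℕ → V} {m : ℕ}
    (hc : RelChain R a b p m) {i j : ℕ} (hij : i + 2 ≤ j) (hjm : j ≤ m) (hR : R (p i) (p j)) :
    ∃ q, RelChain R a b q (m - (j - i) + 1) := by
  obtain ⟨h0, hm, hstep⟩ := hc
  refine ⟨fun t => if t ≤ i then p t else p (t + (j - i) - 1), by simp [h0], ?_, ?_⟩
  · beta_reduce
    have hni : ¬ m - (j - i) + 1 ≤ i := by omega
    rw [if_neg hni]
    have h3 : m - (j - i) + 1 + (j - i) - 1 = m := by omega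
    rw [h3, hm]
  · intro t ht
    by_cases h1 : t + 1 ≤ i
    · simp only [if_pos (by omega : t ≤ i), if_pos h1]
      exact hstep t (by omega)
    · by_cases h2 : t ≤ i
      · have hti : t = i := by omega
        simp only [hti, if_pos le_rfl, if_neg (by omega : ¬ i + 1 ≤ i)]
        have h3 : i + 1 + (j - i) - 1 = j := by omega
        rw [h3]
        exact hR
      · simp only [if_neg h2, if_neg (by omega : ¬ t + 1 ≤ i)]
        have h3 : t + 1 + (j - i) - 1 = t + (j - i) - 1 + 1 := by omega
        rw [h3]
        exact hstep _ (by omega)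

/-- A minimal chain: exists, is injective and chordless. -/
lemma exists_min_chain {R : V → V → Prop} {a b : V} (h : Relation.ReflTransGen R a b) :
    ∃ m p, RelChain R a b p m ∧ (∀ i j, i < j → j ≤ m → p i ≠ p j) ∧
      (∀ i j, i + 2 ≤ j → j ≤ m → ¬ R (p i) (p j)) := by
  classical
  have hex : ∃ m, ∃ p, RelChain R a b p m := by
    obtain ⟨m, p, hc⟩ := chain_of_rtg h
    exact ⟨m, p, hc⟩
  obtain ⟨p, hp⟩ := Nat.find_spec hex
  refine ⟨Nat.find hex, p, hp, ?_, ?_⟩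
  · intro i j hij hjm heq
    obtain ⟨q, hq⟩ := chain_shorten_eq hp hij hjm heq
    exact Nat.find_min hex (by omega) ⟨q, hq⟩
  · intro i j hij hjm hR
    obtain ⟨q, hq⟩ := chain_shorten_adj hp hij hjm hR
    exact Nat.find_min hex (by omega) ⟨q, hq⟩

/-- From a combinatorial induced cycle of length `≥ 4`, contradiction with chordality. -/
lemma cycle_embed (hch : Chordal G) {L : ℕ} (hL : 4 ≤ L) (q : ℕ → V)
    (hinj : ∀ a b, a < b → b < L → q a ≠ q b)
    (hadj : ∀ t, t + 1 < L → G.Adj (q t) (q (t + 1)))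
    (hwrap : G.Adj (q (L - 1)) (q 0))
    (hnadj : ∀ a b, a + 2 ≤ b → b < L → ¬(a = 0 ∧ b = L - 1) → ¬ G.Adj (q a) (q b)) :
    False := by
  obtain ⟨n, rfl⟩ : ∃ n, L = n + 2 := ⟨L - 2, by omega⟩
  have hwrap' : G.Adj (q (n + 1)) (q 0) := by
    have : n + 2 - 1 = n + 1 := rfl
    rwa [this] at hwrap
  have hsub1 : ∀ i j : Fin (n + 2), (j - i = 1) ↔ j.val = (1 + i.val) % (n + 2) := by
    intro i j
    rw [sub_eq_iff_eq_add, Fin.ext_iff, Fin.val_add, Fin.val_one]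
  have hmod : ∀ x : ℕ, x < n + 2 → (1 + x) % (n + 2) = if x = n + 1 then 0 else x + 1 := by
    intro x hx
    by_cases h : x = n + 1
    · rw [if_pos h, h, show 1 + (n + 1) = n + 2 by omega, Nat.mod_self]
    · rw [if_neg h, Nat.add_comm, Nat.mod_eq_of_lt (by omega)]
  have key : ∀ i j : Fin (n + 2), i.val < j.val →
      (G.Adj (q i.val) (q j.val) ↔ (cycleGraph (n + 2)).Adj i j) := by
    intro i j hij
    have hj : j.val < n + 2 := j.isLt
    have hi : i.val < n + 2 := i.isLt
    rw [cycleGraph_adj, hsub1 j i, hsub1 i j, hmod j.val hj, hmod i.val hi]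
    split_ifs with h1 h2 h2
    · exfalso; omega
    · -- j = n+1, i ≠ n+1 : Adj ↔ (i = 0 ∨ j = i+1)
      constructor
      · intro hAdj
        by_contra hcon
        push_neg at hcon
        exact hnadj i.val j.val (by omega) hj (by omega) hAdj
      · rintro (h | h)
        · rw [h, h1]
          exact hwrap'.symm
        · rw [h]
          exact hadj i.val (by omega)
    · exfalso; omega
    · constructor
      · intro hAdj
        by_contra hcon
        push_neg at hcon
        exact hnadj i.val j.val (by omega) hj (by omega) hAdj
      · rintro (h | h)
        · exfalso; omega
        · rw [h]
          exact hadj i.val (by omega)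
  have hiff : ∀ i j : Fin (n + 2),
      (G.Adj (q i.val) (q j.val) ↔ (cycleGraph (n + 2)).Adj i j) := by
    intro i j
    rcases lt_trichotomy i.val j.val with h | h | h
    · exact key i j h
    · have hijeq : i = j := Fin.ext h
      subst hijeq
      constructor
      · intro hAdj
        exact absurd hAdj (G.loopless.irrefl _)
      · intro hAdj
        exact absurd hAdj ((cycleGraph (n + 2)).loopless.irrefl _)
    · constructor
      · intro hAdj
        exact ((key j i h).mp hAdj.symm).symm
      · intro hAdj
        exact ((key j i h).mpr hAdj.symm).symm
  have hfinj : Function.Injective (fun i : Fin (n + 2) => q i.val) := by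
    intro a b hab
    by_contra hne
    rcases lt_trichotomy a.val b.val with h | h | h
    · exact hinj a.val b.val h b.isLt hab
    · exact hne (Fin.ext h)
    · exact hinj b.val a.val h a.isLt hab.symm
  exact (hch (n + 2) (by omega)).false ⟨⟨fun i => q i.val, hfinj⟩, @fun i j => hiff i j⟩

end Infra

section Attach
variable {V : Type} {G : SimpleGraph V}

/-- In a chordal graph, given a connected set `C` and a clique `S` disjoint from `C`
each of whose vertices has a neighbor in `C`, some vertex of `C` is adjacent to all
of `S`. -/
lemma clique_attach (hch : Chordal G) (C : Set V) (hCne : C.Nonempty)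
    (hconn : ∀ a ∈ C, ∀ b ∈ C,
      Relation.ReflTransGen (fun x y => G.Adj x y ∧ x ∈ C ∧ y ∈ C) a b) :
    ∀ S : Set V, S.Finite → G.IsClique S → (∀ s ∈ S, s ∉ C) →
      (∀ s ∈ S, ∃ x ∈ C, G.Adj s x) → ∃ v ∈ C, ∀ s ∈ S, G.Adj v s := by
  intro S hSfin
  refine Set.Finite.induction_on
    (motive := fun S _ => G.IsClique S → (∀ s ∈ S, s ∉ C) →
      (∀ s ∈ S, ∃ x ∈ C, G.Adj s x) → ∃ v ∈ C, ∀ s ∈ S, G.Adj v s) S hSfin ?_ ?_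
  · intro _ _ _
    obtain ⟨v, hv⟩ := hCne
    exact ⟨v, hv, fun s hs => absurd hs (Set.notMem_empty s)⟩
  · intro s S' hsS' hS'fin ih hcl hdisj hnb
    obtain ⟨v', hv'C, hv'S⟩ := ih (hcl.subset (Set.subset_insert s S'))
      (fun x hx => hdisj x (Set.mem_insert_of_mem s hx))
      (fun x hx => hnb x (Set.mem_insert_of_mem s hx))
    have hsC : s ∉ C := hdisj s (Set.mem_insert s S')
    by_cases hvs : G.Adj v' s
    · refine ⟨v', hv'C, fun s₀ hs₀ => ?_⟩
      rcases Set.mem_insert_iff.mp hs₀ with h | h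
      · rw [h]; exact hvs
      · exact hv'S s₀ h
    · -- main case: shortest chain from v' to s in C ∪ {s}
      classical
      set R : V → V → Prop := fun x y => G.Adj x y ∧ x ∈ insert s C ∧ y ∈ insert s C with hR
      obtain ⟨c₀, hc₀C, hc₀adj⟩ := hnb s (Set.mem_insert s S')
      have hrtg : Relation.ReflTransGen R v' s := by
        have h1 : Relation.ReflTransGen R v' c₀ := by
          refine Relation.ReflTransGen.mono ?_ _ _ (hconn v' hv'C c₀ hc₀C)
          rintro x y ⟨h1, h2, h3⟩
          exact ⟨h1, Set.mem_insert_of_mem s h2, Set.mem_insert_of_mem s h3⟩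
        exact h1.tail ⟨hc₀adj.symm, Set.mem_insert_of_mem s hc₀C, Set.mem_insert s C⟩
      obtain ⟨m, p, ⟨hp0, hpm, hstep⟩, hpinj, hnochord⟩ := exists_min_chain hrtg
      have hm2 : 2 ≤ m := by
        rcases Nat.lt_or_ge m 2 with h | h
        · interval_cases m
          · exfalso
            have hvs' : v' = s := by rw [← hp0, hpm]
            exact hsC (hvs' ▸ hv'C)
          · exfalso
            have := (hstep 0 (by omega)).1
            rw [hp0] at this
            have h1 : p 1 = s := hpm
            rw [h1] at this
            exact hvs this
        · exact h
      have hmem : ∀ t, t ≤ m → p t ∈ insert s C := by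
        intro t ht
        rcases Nat.eq_zero_or_pos t with h | h
        · rw [h, hp0]; exact Set.mem_insert_of_mem s hv'C
        · have := (hstep (t - 1) (by omega)).2.2
          rwa [show t - 1 + 1 = t by omega] at this
      have hmemC : ∀ t, t < m → p t ∈ C := by
        intro t ht
        rcases Set.mem_insert_iff.mp (hmem t (by omega)) with h | h
        · exfalso
          exact hpinj t m ht le_rfl (h.trans hpm.symm)
        · exact h
      have hlast : G.Adj (p (m - 1)) s := by
        have := (hstep (m - 1) (by omega)).1
        rwa [show m - 1 + 1 = m by omega, hpm] at this
      refine ⟨p (m - 1), hmemC (m - 1) (by omega), fun s₀ hs₀ => ?_⟩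
      rcases Set.mem_insert_iff.mp hs₀ with h | h
      · rw [h]; exact hlast
      -- s₀ ∈ S'; show p (m-1) adjacent to s₀
      have hP0 : G.Adj s₀ (p 0) := by rw [hp0]; exact (hv'S s₀ h).symm
      set istar := Nat.findGreatest (fun i => G.Adj s₀ (p i)) (m - 1) with histar
      have hspec : G.Adj s₀ (p istar) := by
        have := Nat.findGreatest_spec (P := fun i => G.Adj s₀ (p i)) (Nat.zero_le (m - 1)) hP0
        rwa [← histar] at this
      have histarle : istar ≤ m - 1 := Nat.findGreatest_le _
      by_cases hfin : istar = m - 1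
      · rw [hfin] at hspec; exact hspec.symm
      · exfalso
        have histar2 : istar ≤ m - 2 := by omega
        -- build induced cycle s₀, p istar, ..., p m
        set L := m - istar + 2 with hLdef
        have hL4 : 4 ≤ L := by omega
        set q : ℕ → V := fun t => if t = 0 then s₀ else p (istar + t - 1) with hq
        have hq0 : q 0 = s₀ := rfl
        have hqt : ∀ t, 1 ≤ t → q t = p (istar + t - 1) := by
          intro t ht
          simp only [hq, if_neg (by omega : ¬ t = 0)]
        apply cycle_embed hch hL4 q
        · -- injectivity
          intro a b hab hbL
          rcases Nat.eq_zero_or_pos a with ha | ha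
          · rw [ha, hq0, hqt b (by omega)]
            intro heq
            set jj := istar + b - 1 with hjj
            have hjjm : jj ≤ m := by omega
            rcases Nat.lt_or_ge jj m with hlt | hge
            · exact hdisj s₀ (Set.mem_insert_of_mem s h) (heq ▸ hmemC jj hlt)
            · have : jj = m := by omega
              rw [this, hpm] at heq
              exact hsS' (heq ▸ h)
          · rw [hqt a (by omega), hqt b (by omega)]
            exact hpinj (istar + a - 1) (istar + b - 1) (by omega) (by omega)
        · -- consecutive adjacency
          intro t ht
          rcases Nat.eq_zero_or_pos t with h0 | h0
          · rw [h0, hq0, hqt 1 le_rfl]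
            simpa using hspec
          · rw [hqt t (by omega), hqt (t + 1) (by omega)]
            have := (hstep (istar + t - 1) (by omega)).1
            rwa [show istar + t - 1 + 1 = istar + (t + 1) - 1 by omega] at this
        · -- wrap edge
          rw [hqt (L - 1) (by omega), hq0]
          have : istar + (L - 1) - 1 = m := by omega
          rw [this, hpm]
          exact hcl (Set.mem_insert s S') (Set.mem_insert_of_mem s h)
            (fun hss => hsS' (hss ▸ h))
        · -- non-adjacency
          intro a b hab hbL hnw
          rcases Nat.eq_zero_or_pos a with ha | ha
          · rw [ha, hq0, hqt b (by omega)]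
            set jj := istar + b - 1 with hjj
            have hjork : jj ≤ m - 1 := by omega
            have : ¬ G.Adj s₀ (p jj) := by
              apply Nat.findGreatest_is_greatest (P := fun i => G.Adj s₀ (p i))
                (k := jj) (by omega) hjork
            intro hAdj
            exact this hAdj
          · rw [hqt a (by omega), hqt b (by omega)]
            intro hAdj
            have hjm : istar + b - 1 ≤ m := by omega
            have hmm1 : istar + a - 1 ≤ m := by omega
            apply hnochord (istar + a - 1) (istar + b - 1) (by omega) hjm
            exact ⟨hAdj, hmem _ hmm1, hmem _ hjm⟩

end Attach

section Main
variable {V : Type} {G : SimpleGraph V}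

lemma clique_ncard_le [Fintype V] {k : ℕ}
    (hcol : ∃ α : V → Fin k, IsColoring G k α) {T : Set V} (hT : G.IsClique T) :
    T.ncard ≤ k := by
  obtain ⟨α, hα⟩ := hcol
  have hinj : Set.InjOn α T := by
    intro a ha b hb hab
    by_contra hne
    exact hα a b (hT ha hb hne) hab
  calc T.ncard = (α '' T).ncard := (Set.ncard_image_of_injOn hinj).symm
    _ ≤ (Set.univ : Set (Fin k)).ncard :=
        Set.ncard_le_ncard (Set.subset_univ _) Set.finite_univ
    _ = k := by rw [Set.ncard_univ, Nat.card_eq_fintype_card, Fintype.card_fin]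

lemma peel_terminals [Fintype V] {C S T : Set V}
    (hST : S ⊆ T) (hCT : ∀ x ∈ C, x ∉ T) (hCne : C.Nonempty) (hTcl : G.IsClique T)
    (hSdef : ∀ t ∈ T, (∃ x ∈ C, G.Adj t x) → t ∈ S) {c : ℕ}
    (hc : CNiceTD G (C ∪ S) S c) :
    CNiceTD G (C ∪ T) T (c + (T \ S).ncard) := by
  have key : ∀ D : Set V, D.Finite → D ⊆ T \ S →
      CNiceTD G ((C ∪ S) ∪ D) (S ∪ D) (c + D.ncard) := by
    intro D hDfin
    refine Set.Finite.induction_on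
      (motive := fun D _ => D ⊆ T \ S → CNiceTD G ((C ∪ S) ∪ D) (S ∪ D) (c + D.ncard))
      D hDfin ?_ ?_
    · intro _
      simpa using hc
    · intro t D htD hDfin' ih hsub
      have hprev := ih (fun x hx => hsub (Set.mem_insert_of_mem t hx))
      have htTS : t ∈ T \ S := hsub (Set.mem_insert t D)
      have htC : t ∉ C := fun h => hCT t h htTS.1
      have htD' : t ∉ D := htD
      have hDTS : D ⊆ T \ S := fun x hx => hsub (Set.mem_insert_of_mem t hx)
      have hncard : (insert t D).ncard = D.ncard + 1 :=
        Set.ncard_insert_of_notMem htD (Set.toFinite D)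
      rw [hncard, ← Nat.add_assoc]
      have hU : ((C ∪ S) ∪ insert t D) \ {t} = (C ∪ S) ∪ D := by
        rw [Set.union_insert, Set.insert_sdiff_self_of_notMem]
        rintro ((h | h) | h)
        · exact htC h
        · exact htTS.2 h
        · exact htD h
      have hT' : (S ∪ insert t D) \ {t} = S ∪ D := by
        rw [Set.union_insert, Set.insert_sdiff_self_of_notMem]
        rintro (h | h)
        · exact htTS.2 h
        · exact htD h
      have hprev' : CNiceTD G (((C ∪ S) ∪ insert t D) \ {t})
          ((S ∪ insert t D) \ {t}) (c + D.ncard) := by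
        rw [hU, hT']; exact hprev
      refine CNiceTD.introduce _ _ t (Or.inr (Set.mem_insert t D)) ?_ ?_ ?_ ?_ _ hprev'
      · rintro x (hx | hx)
        · exact Or.inl (Or.inr hx)
        · exact Or.inr hx
      · intro heq
        obtain ⟨x, hx⟩ := hCne
        have hxm : x ∈ S ∪ insert t D := by rw [heq]; exact Or.inl (Or.inl hx)
        rcases hxm with h | h
        · exact hCT x hx (hST h)
        · rcases h with h | h
          · rw [h] at hx; exact htC hx
          · exact hCT x hx (hDTS h).1
      · intro u hu hadj
        rcases hu with hu | hu
        · rcases hu with hu | hu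
          · exact absurd (hSdef t htTS.1 ⟨u, hu, hadj⟩) htTS.2
          · exact Or.inl hu
        · exact Or.inr hu
      · apply hTcl.subset
        rintro x (hx | hx)
        · exact hST hx
        · rcases hx with hx | hx
          · rw [hx]; exact htTS.1
          · exact (hDTS hx).1
  have := key (T \ S) (Set.toFinite _) Set.Subset.rfl
  rwa [Set.union_assoc, Set.union_diff_cancel hST] at this

lemma main_construct [Fintype V] [DecidableEq V] {k : ℕ}
    (hch : Chordal G) (hcol : ∃ α : V → Fin k, IsColoring G k α) :
    ∀ n : ℕ, ∀ U T : Set V, (U \ T).ncard ≤ n → T ⊆ U → G.IsClique T → T ≠ U →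
      ∃ c : ℕ, CNiceTD G U T c ∧ c + 1 ≤ (k + 3) * (U \ T).ncard := by
  intro n
  induction n with
  | zero =>
    intro U T hle hTU hTcl hne
    exfalso
    have hWne : (U \ T).Nonempty := by
      rw [Set.diff_nonempty]
      intro h
      exact hne (Set.Subset.antisymm hTU h)
    have := (Set.ncard_pos (Set.toFinite _)).mpr hWne
    omega
  | succ n IH =>
    intro U T hle hTU hTcl hne
    classical
    have hWne : (U \ T).Nonempty := by
      rw [Set.diff_nonempty]
      intro h
      exact hne (Set.Subset.antisymm hTU h)
    obtain ⟨v₀, hv₀⟩ := hWne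
    set W := U \ T with hWdef
    set RW : V → V → Prop := fun x y => G.Adj x y ∧ x ∈ W ∧ y ∈ W with hRWdef
    set C : Set V := {x | x ∈ W ∧ Relation.ReflTransGen RW v₀ x} with hCdef
    have hCW : C ⊆ W := fun x hx => hx.1
    have hv₀C : v₀ ∈ C := ⟨hv₀, Relation.ReflTransGen.refl⟩
    have hCne : C.Nonempty := ⟨v₀, hv₀C⟩
    have hclosed : ∀ x ∈ C, ∀ y, y ∈ W → G.Adj x y → y ∈ C :=
      fun x hx y hyW hadj => ⟨hyW, hx.2.tail ⟨hadj, hx.1, hyW⟩⟩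
    have hRC : ∀ x ∈ C, Relation.ReflTransGen
        (fun a b => G.Adj a b ∧ a ∈ C ∧ b ∈ C) v₀ x := by
      rintro x ⟨hxW, hreach⟩
      clear hxW
      induction hreach with
      | refl => exact Relation.ReflTransGen.refl
      | @tail b x h1 h2 ih =>
        have hbC : b ∈ C := ⟨h2.2.1, h1⟩
        have hxC : x ∈ C := ⟨h2.2.2, h1.tail h2⟩
        exact ih.tail ⟨h2.1, hbC, hxC⟩
    have hconnC : ∀ a ∈ C, ∀ b ∈ C, Relation.ReflTransGen
        (fun x y => G.Adj x y ∧ x ∈ C ∧ y ∈ C) a b := by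
      intro a ha b hb
      have hsymm : Symmetric (fun x y => G.Adj x y ∧ x ∈ C ∧ y ∈ C) :=
        fun x y h => ⟨h.1.symm, h.2.2, h.2.1⟩
      exact Relation.ReflTransGen.trans
        (by
          haveI : Std.Symm (fun x y => G.Adj x y ∧ x ∈ C ∧ y ∈ C) := Std.Symm.mk (fun x y h => hsymm h)
          exact Relation.ReflTransGen.stdSymm.symm _ _ (hRC a ha)) (hRC b hb)
    have hCU : C ⊆ U := fun x hx => (hCW hx).1
    have hCnT : ∀ x ∈ C, x ∉ T := fun x hx => (hCW hx).2
    by_cases hWC : W ⊆ C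
    · -- G[U \ T] is connected
      have hCeqW : C = W := Set.Subset.antisymm hCW hWC
      set S : Set V := {t | t ∈ T ∧ ∃ x ∈ C, G.Adj t x} with hSdef
      have hST : S ⊆ T := fun t ht => ht.1
      have hScl : G.IsClique S := hTcl.subset hST
      obtain ⟨v, hvC, hvS⟩ := clique_attach hch C hCne hconnC S (Set.toFinite S) hScl
        (fun s hs hsC => hCnT s hsC (hST hs)) (fun s hs => hs.2)
      have hvnS : v ∉ S := fun h => hCnT v hvC (hST h)
      have hvT₀cl : G.IsClique (S ∪ {v}) := by
        rw [Set.union_singleton]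
        intro a ha b hb hne'
        rcases Set.mem_insert_iff.mp ha with h | h
        · rcases Set.mem_insert_iff.mp hb with h' | h'
          · exact absurd (h.trans h'.symm) hne'
          · rw [h]; exact hvS b h'
        · rcases Set.mem_insert_iff.mp hb with h' | h'
          · rw [h']; exact (hvS a h).symm
          · exact hScl h h' hne'
      have htSk : (T \ S).ncard ≤ k :=
        le_trans (Set.ncard_le_ncard Set.diff_subset (Set.toFinite T))
          (clique_ncard_le hcol hTcl)
      have hC1 : 1 ≤ C.ncard := (Set.ncard_pos (Set.toFinite C)).mpr hCne
      have hCnc : C.ncard ≤ n + 1 := by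
        calc C.ncard ≤ W.ncard := Set.ncard_le_ncard hCW (Set.toFinite W)
          _ ≤ n + 1 := hle
      obtain ⟨cmid, hmid, hmidle⟩ : ∃ cmid, CNiceTD G (C ∪ S) S cmid ∧
          cmid + (T \ S).ncard + 1 ≤ (k + 3) * C.ncard := by
        by_cases hCv : C ⊆ {v}
        · have hCv' : C = {v} := Set.Subset.antisymm hCv (Set.singleton_subset_iff.mpr hvC)
          have hcard1 : C.ncard = 1 := by rw [hCv']; exact Set.ncard_singleton v
          have hCS : C ∪ S = S ∪ {v} := by rw [hCv', Set.union_comm]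
          have hprev : CNiceTD G (C ∪ S) (S ∪ {v}) 1 := by
            rw [hCS]; exact CNiceTD.leaf _ hvT₀cl
          refine ⟨2, CNiceTD.forget _ _ v (Or.inl hvC) hvnS hScl 1 hprev, ?_⟩
          rw [hcard1, Nat.mul_one]
          omega
        · have hu : ∃ u, u ∈ C ∧ u ≠ v := by
            by_contra h
            push_neg at h
            exact hCv fun x hx => h x hx
          obtain ⟨u, huC, huv⟩ := hu
          have hdiffeq : (C ∪ S) \ (S ∪ {v}) = C \ {v} := by
            ext x
            simp only [Set.mem_diff, Set.mem_union, Set.mem_singleton_iff]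
            constructor
            · rintro ⟨h1 | h1, h2⟩
              · exact ⟨h1, fun h => h2 (Or.inr h)⟩
              · exact absurd (Or.inl h1) h2
            · rintro ⟨h1, h2⟩
              refine ⟨Or.inl h1, ?_⟩
              rintro (h | h)
              · exact hCnT x h1 (hST h)
              · exact h2 h
          have hcardd : (C \ {v}).ncard = C.ncard - 1 :=
            Set.ncard_diff_singleton_of_mem hvC
          obtain ⟨c₀, hc₀, hc₀le⟩ := IH (C ∪ S) (S ∪ {v})
            (by rw [hdiffeq, hcardd]; omega)
            (by
              rintro x (hx | hx)
              · exact Or.inr hx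
              · rw [Set.mem_singleton_iff] at hx; rw [hx]; exact Or.inl hvC)
            hvT₀cl
            (by
              intro heq
              have hum : u ∈ S ∪ {v} := by rw [heq]; exact Or.inl huC
              rcases hum with h | h
              · exact hCnT u huC (hST h)
              · exact huv h)
          rw [hdiffeq, hcardd] at hc₀le
          refine ⟨c₀ + 1, CNiceTD.forget _ _ v (Or.inl hvC) hvnS hScl c₀ hc₀, ?_⟩
          have hmul : (k + 3) * (C.ncard - 1) + (k + 3) = (k + 3) * C.ncard := by
            rw [← Nat.mul_succ]
            congr 1
            omega
          have hcomb := Nat.add_le_add hc₀le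
            (show (T \ S).ncard + 2 ≤ k + 3 by omega)
          rw [hmul] at hcomb
          linarith
      have hfull := peel_terminals hST hCnT hCne hTcl
        (fun t ht hex => ⟨ht, hex⟩) hmid
      have hCTU : C ∪ T = U := by
        rw [hCeqW]
        exact Set.diff_union_of_subset hTU
      have hWC' : W.ncard = C.ncard := by rw [hCeqW]
      refine ⟨cmid + (T \ S).ncard, by rw [← hCTU]; exact hfull, ?_⟩
      calc cmid + (T \ S).ncard + 1 ≤ (k + 3) * C.ncard := hmidle
        _ = (k + 3) * W.ncard := by rw [hWC']
    · -- disconnected: split off the component C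
      obtain ⟨w, hwW, hwC⟩ := Set.not_subset.mp hWC
      have hUU : (T ∪ C) ∪ (U \ C) = U := by
        ext x
        simp only [Set.mem_union, Set.mem_diff]
        constructor
        · rintro ((h | h) | h)
          · exact hTU h
          · exact hCU h
          · exact h.1
        · intro h
          by_cases hxC : x ∈ C
          · exact Or.inl (Or.inr hxC)
          · exact Or.inr ⟨h, hxC⟩
      have hU₁dT : (T ∪ C) \ T = C := by
        rw [Set.union_diff_left]
        ext x
        simp only [Set.mem_diff]
        exact ⟨fun h => h.1, fun h => ⟨h, hCnT x h⟩⟩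
      have hU₂dT : (U \ C) \ T = W \ C := by
        ext x
        simp only [Set.mem_diff, hWdef]
        tauto
      have hCssW : C ⊂ W := ⟨hCW, fun h => hwC (h hwW)⟩
      have hClt : C.ncard < W.ncard := Set.ncard_lt_ncard hCssW (Set.toFinite W)
      have hsum : (W \ C).ncard + C.ncard = W.ncard :=
        Set.ncard_diff_add_ncard_of_subset hCW (Set.toFinite W)
      have hC1 : 1 ≤ C.ncard := (Set.ncard_pos (Set.toFinite C)).mpr hCne
      obtain ⟨c₁, hc₁, hc₁le⟩ := IH (T ∪ C) T
        (by rw [hU₁dT]; omega)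
        Set.subset_union_left hTcl
        (by
          intro heq
          have : v₀ ∈ T := by rw [heq]; exact Or.inr hv₀C
          exact hv₀.2 this)
      obtain ⟨c₂, hc₂, hc₂le⟩ := IH (U \ C) T
        (by rw [hU₂dT]; omega)
        (fun x hx => ⟨hTU hx, fun hxC => hCnT x hxC hx⟩) hTcl
        (by
          intro heq
          have : w ∈ T := by rw [heq]; exact ⟨hv₀ |> fun _ => hwW.1, hwC⟩
          exact hwW.2 this)
      rw [hU₁dT] at hc₁le
      rw [hU₂dT] at hc₂le
      have hcap : (T ∪ C) ∩ (U \ C) = T := by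
        ext x
        simp only [Set.mem_inter_iff, Set.mem_union, Set.mem_diff]
        constructor
        · rintro ⟨h1 | h1, h2⟩
          · exact h1
          · exact absurd h1 h2.2
        · intro h
          exact ⟨Or.inl h, hTU h, fun hxC => hCnT x hxC h⟩
      have hne1 : T ∪ C ≠ T := by
        intro heq
        have : v₀ ∈ T := by rw [← heq]; exact Or.inr hv₀C
        exact hv₀.2 this
      have hne2 : U \ C ≠ T := by
        intro heq
        have : w ∈ T := by rw [← heq]; exact ⟨hwW.1, hwC⟩
        exact hwW.2 this
      have hedge : ∀ a b : V, a ∈ (T ∪ C) ∪ (U \ C) → b ∈ (T ∪ C) ∪ (U \ C) →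
          G.Adj a b → (a ∈ T ∪ C ∧ b ∈ T ∪ C) ∨ (a ∈ U \ C ∧ b ∈ U \ C) := by
        intro a b ha hb hadj
        rw [hUU] at ha hb
        by_cases haC : a ∈ C
        · by_cases hbC : b ∈ C
          · exact Or.inl ⟨Or.inr haC, Or.inr hbC⟩
          · by_cases hbT : b ∈ T
            · exact Or.inl ⟨Or.inr haC, Or.inl hbT⟩
            · exact absurd (hclosed a haC b ⟨hb, hbT⟩ hadj) hbC
        · by_cases hbC : b ∈ C
          · by_cases haT : a ∈ T
            · exact Or.inl ⟨Or.inl haT, Or.inr hbC⟩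
            · exact absurd (hclosed b hbC a ⟨ha, haT⟩ hadj.symm) haC
          · exact Or.inr ⟨⟨ha, haC⟩, ⟨hb, hbC⟩⟩
      have hjoin := CNiceTD.join (T ∪ C) (U \ C) T hcap hne1 hne2 hedge hTcl
        c₁ c₂ hc₁ hc₂
      rw [hUU] at hjoin
      refine ⟨c₁ + c₂ + 1, hjoin, ?_⟩
      have heq : (k + 3) * C.ncard + (k + 3) * (W \ C).ncard = (k + 3) * W.ncard := by
        rw [← Nat.mul_add, Nat.add_comm (C.ncard), hsum]
      have hcomb := Nat.add_le_add hc₁le hc₂le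
      rw [heq] at hcomb
      linarith

end Main

/-- every chordal `k`-colorable graph `G` on `n ≥ 1` vertices with a
clique `T` admits a chordal nice tree decomposition of `(G,T)` with at most
`(k+3)·n` nodes. -/
theorem statement_9 {V : Type} [Fintype V] [DecidableEq V] (G : SimpleGraph V)
    (k : ℕ) (hk : 1 ≤ k) (hchord : Chordal G)
    (hcol : ∃ α : V → Fin k, IsColoring G k α)
    (T : Set V) (hT : G.IsClique T) (hn : 1 ≤ Fintype.card V) :
    ∃ nt : ℕ, CNiceTD G Set.univ T nt ∧ nt ≤ (k + 3) * Fintype.card V := by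
  classical
  by_cases hTuniv : T = Set.univ
  · refine ⟨1, ?_, ?_⟩
    · rw [← hTuniv]
      exact CNiceTD.leaf T hT
    · have h1 : 1 ≤ (k + 3) * Fintype.card V := Nat.mul_pos (by omega) hn
      exact h1
  · obtain ⟨c, hc, hcle⟩ := main_construct hchord hcol ((Set.univ \ T).ncard)
      Set.univ T le_rfl (Set.subset_univ T) hT hTuniv
    refine ⟨c, hc, ?_⟩
    have h1 : (Set.univ \ T).ncard ≤ Fintype.card V := by
      calc (Set.univ \ T).ncard ≤ (Set.univ : Set V).ncard :=
            Set.ncard_le_ncard Set.diff_subset Set.finite_univ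
        _ = Fintype.card V := by rw [Set.ncard_univ, Nat.card_eq_fintype_card]
    have h2 := Nat.mul_le_mul_left (k + 3) h1
    linarith
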